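/- Let F3 = ⟨α1, α2, α3⟩ be the free group on three generators and Π = α1α2α3. The quotient of F3 by the relations α1 = α3, α2 = α3α2α3⁻¹, α3 = Πα1Π⁻¹ is free abelian of rank 2. -/

import Mathlib

/-- The generators `α₁, α₂, α₃` of the free group `F₃`. -/
def α (i : Fin 3) : FreeGroup (Fin 3) := FreeGroup.of i

/-- `Π = α₁α₂α₃`. -/
def Pi3 : FreeGroup (Fin 3) := α 0 * α 1 * α 2

/-- The monodromy relations of a singular fiber of type `Ã₁*`:
`α₁ = α₃`, `α₂ = α₃α₂α₃⁻¹`, `α₃ = Πα₁Π⁻¹`. -/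
def rels : Set (FreeGroup (Fin 3)) :=
  {(α 0)⁻¹ * α 2, (α 1)⁻¹ * (α 2 * α 1 * (α 2)⁻¹), (α 2)⁻¹ * (Pi3 * α 0 * Pi3⁻¹)}

namespace A1star

abbrev Q := FreeGroup (Fin 3) ⧸ Subgroup.normalClosure rels

def mkQ : FreeGroup (Fin 3) →* Q := QuotientGroup.mk' _

lemma rel_one {x : FreeGroup (Fin 3)} (h : x ∈ rels) : mkQ x = 1 :=
  (QuotientGroup.eq_one_iff x).mpr (Subgroup.subset_normalClosure h)

def A : Q := mkQ (α 0)
def B : Q := mkQ (α 1)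

lemma hA2 : mkQ (α 2) = A := by
  have h := rel_one (x := (α 0)⁻¹ * α 2) (by left; rfl)
  simp only [map_mul, map_inv] at h
  exact (inv_mul_eq_one.mp h).symm

lemma hcomm : Commute A B := by
  have h := rel_one (x := (α 1)⁻¹ * (α 2 * α 1 * (α 2)⁻¹)) (by right; left; rfl)
  simp only [map_mul, map_inv, hA2] at h
  have hB : mkQ (α 1) = A * mkQ (α 1) * A⁻¹ := inv_mul_eq_one.mp h
  show A * B = B * A
  rw [B]
  conv_rhs => rw [hB]
  group

def f : Fin 3 → Multiplicative (ℤ × ℤ) := fun i =>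
  if i = 1 then Multiplicative.ofAdd (0, 1) else Multiplicative.ofAdd (1, 0)

def front : FreeGroup (Fin 3) →* Multiplicative (ℤ × ℤ) := FreeGroup.lift f

lemma front_ker : rels ⊆ (front.ker : Set (FreeGroup (Fin 3))) := by
  intro x hx
  rcases hx with h | h | h <;> subst h <;>
  · show front _ = 1
    apply Multiplicative.toAdd.injective
    simp [front, Pi3, α, f]
    try abel

def frontQ : Q →* Multiplicative (ℤ × ℤ) :=
  QuotientGroup.lift _ front
    (fun x hx => (Subgroup.normalClosure_le_normal front_ker) hx)

def back : Multiplicative (ℤ × ℤ) →* Q where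
  toFun p := A ^ (Multiplicative.toAdd p).1 * B ^ (Multiplicative.toAdd p).2
  map_one' := by simp
  map_mul' x y := by
    simp only [toAdd_mul, Prod.fst_add, Prod.snd_add, zpow_add]
    rw [(hcomm.symm.zpow_zpow _ _).mul_mul_mul_comm]

lemma frontQ_mk (x : FreeGroup (Fin 3)) : frontQ (mkQ x) = front x := rfl

lemma back_apply (a b : ℤ) : back (Multiplicative.ofAdd (a, b)) = A ^ a * B ^ b := rfl

lemma front_of (i : Fin 3) : front (α i) = f i := FreeGroup.lift_apply_of

lemma left_inv : back.comp frontQ = MonoidHom.id Q := by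
  apply QuotientGroup.monoidHom_ext
  apply FreeGroup.ext_hom
  intro i
  show back (frontQ (mkQ (FreeGroup.of i))) = mkQ (FreeGroup.of i)
  rw [show FreeGroup.of i = α i from rfl, frontQ_mk, front_of]
  fin_cases i
  · show back (Multiplicative.ofAdd ((1 : ℤ), (0 : ℤ))) = mkQ (α 0)
    rw [back_apply]; simp [A]
  · show back (Multiplicative.ofAdd ((0 : ℤ), (1 : ℤ))) = mkQ (α 1)
    rw [back_apply]; simp [B]
  · show back (Multiplicative.ofAdd ((1 : ℤ), (0 : ℤ))) = mkQ (α 2)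
    rw [back_apply, hA2]; simp

lemma right_inv : frontQ.comp back = MonoidHom.id (Multiplicative (ℤ × ℤ)) := by
  apply MonoidHom.ext; intro p
  rw [MonoidHom.comp_apply, MonoidHom.id_apply]
  show frontQ (A ^ (Multiplicative.toAdd p).1 * B ^ (Multiplicative.toAdd p).2) = p
  have hA : frontQ A = Multiplicative.ofAdd ((1 : ℤ), (0 : ℤ)) := by
    rw [A, frontQ_mk, front_of]; rfl
  have hB : frontQ B = Multiplicative.ofAdd ((0 : ℤ), (1 : ℤ)) := by
    rw [B, frontQ_mk, front_of]; rfl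
  apply Multiplicative.toAdd.injective
  rw [map_mul, map_zpow, map_zpow, hA, hB]
  simp [toAdd_zpow]

end A1star

/-- The quotient of `F₃` by the monodromy relations of an `Ã₁*` fiber is
free abelian of rank two. -/
theorem stmt_10 :
    Nonempty ((FreeGroup (Fin 3) ⧸ Subgroup.normalClosure rels) ≃* Multiplicative (ℤ × ℤ)) := by
  exact ⟨A1star.frontQ.toMulEquiv A1star.back A1star.left_inv A1star.right_inv⟩
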